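/- Let m > 0 and let I(k) satisfy I(k+1) = C_{m,n}(k)I(k), I(0) = (−1, m/a_n(0))^T, with I^{(1)}(k) < 0 and I^{(2)}(k) > 0 for all k. Then for all k ≥ 0: I^{(2)}(k) ≤ m · ε(m,n) · (−I^{(1)}(k+1)), where ε(m,n) = ∑_{k=0}^∞ a_{n+1}(k)/(m² + a_n(k) a_{n+1}(k)). -/

import Mathlib

open Matrix Filter Finset

/-- The matrix `C_{m,n}(k)` from the quantum solid torus Dirac operator. -/
noncomputable def Cmat (a c1 c2 : ℕ → ℕ → ℝ) (m : ℤ) (n k : ℕ) :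
    Matrix (Fin 2) (Fin 2) ℝ :=
  !![1 / c1 n k, -(m : ℝ) / (a (n + 1) k * c1 n k);
     -(m : ℝ) / (a n (k + 1) * c1 n k),
     c2 n k + (m : ℝ) ^ 2 / (a n (k + 1) * a (n + 1) k * c1 n k)]

lemma key_ineq (mr A B u v y Sk : ℝ) (hm : 0 < mr) (hA : 0 < A) (hB : 0 < B)
    (hu : 0 < u) (hv0 : 0 < v) (hS : 0 ≤ Sk)
    (hv : v ≤ mr / A * u + y) (hy : y ≤ mr * Sk * u) :
    v ≤ mr * (Sk + B / (mr ^ 2 + A * B)) * (u + mr / B * v) := by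
  have hden : 0 < mr ^ 2 + A * B := by positivity
  set F : ℝ := B / (mr ^ 2 + A * B) with hF
  have hFpos : 0 < F := by positivity
  have hvw : v ≤ (mr / A + mr * Sk) * u := by nlinarith
  by_cases hcase : B ≤ mr ^ 2 * (Sk + F)
  · have h1 : v ≤ mr * (Sk + F) * (mr / B * v) := by
      have heq : mr * (Sk + F) * (mr / B * v) = mr ^ 2 * (Sk + F) * v / B := by ring
      rw [heq, le_div_iff₀ hB]
      nlinarith
    nlinarith [mul_pos (mul_pos hm (add_pos_of_nonneg_of_pos hS hFpos)) hu]
  · push_neg at hcase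
    have hscalar : (1 / A + Sk) * (1 - mr ^ 2 * (Sk + F) / B) ≤ Sk + F := by
      rw [hF]
      field_simp
      ring_nf
      nlinarith [mul_nonneg hS (by positivity : (0:ℝ) ≤ mr^4), mul_nonneg hS (by positivity : (0:ℝ) ≤ A*mr^2*B),
        mul_nonneg (mul_nonneg hS hS) (by positivity : (0:ℝ) ≤ A*mr^2*(mr^2+A*B)),
        mul_nonneg hS (by positivity : (0:ℝ) ≤ A*mr^4*B),
        mul_nonneg hS (by positivity : (0:ℝ) ≤ A^2*mr^2*B^2),
        mul_nonneg hS (by positivity : (0:ℝ) ≤ mr^6),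
        mul_nonneg (mul_nonneg hS hS) (by positivity : (0:ℝ) ≤ A*mr^6),
        mul_nonneg (mul_nonneg hS hS) (by positivity : (0:ℝ) ≤ A^2*mr^4*B),
        mul_nonneg (mul_nonneg hS hS) (by positivity : (0:ℝ) ≤ A^3*mr^2*B^2)]
    have halpha : 0 < 1 - mr ^ 2 * (Sk + F) / B := by
      rw [sub_pos, div_lt_one hB]; linarith
    have h2 : v * (1 - mr ^ 2 * (Sk + F) / B) ≤ (mr / A + mr * Sk) * u * (1 - mr ^ 2 * (Sk + F) / B) :=
      mul_le_mul_of_nonneg_right hvw (le_of_lt halpha)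
    have h3 : (mr / A + mr * Sk) * u * (1 - mr ^ 2 * (Sk + F) / B) ≤ mr * (Sk + F) * u := by
      calc (mr / A + mr * Sk) * u * (1 - mr ^ 2 * (Sk + F) / B)
          = mr * ((1 / A + Sk) * (1 - mr ^ 2 * (Sk + F) / B)) * u := by ring
        _ ≤ mr * (Sk + F) * u := by
            apply mul_le_mul_of_nonneg_right _ (le_of_lt hu)
            exact mul_le_mul_of_nonneg_left hscalar (le_of_lt hm)
    have heq1 : v * (1 - mr ^ 2 * (Sk + F) / B) = v - v * (mr ^ 2 * (Sk + F) / B) := by ring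
    have heq2 : mr * (Sk + F) * (u + mr / B * v) = mr * (Sk + F) * u + v * (mr ^ 2 * (Sk + F) / B) := by ring
    linarith

theorem stmt_13 (a c1 c2 : ℕ → ℕ → ℝ)
    (ha : ∀ n k, 0 < a n k)
    (hsum : ∀ n, Summable fun k => 1 / a n k)
    (hc1 : ∀ n k, 0 < c1 n k ∧ c1 n k ≤ 1)
    (hc2 : ∀ n k, 0 < c2 n k ∧ c2 n k ≤ 1)
    (m : ℤ) (hm : 0 < m) (n : ℕ)
    (I : ℕ → Fin 2 → ℝ)
    (hIrec : ∀ k, I (k + 1) = Cmat a c1 c2 m n k *ᵥ I k)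
    (hI0 : I 0 = ![(-1 : ℝ), (m : ℝ) / a n 0])
    (hI1 : ∀ k, I k 0 < 0) (hI2 : ∀ k, 0 < I k 1) :
    ∀ k, I k 1 ≤
      (m : ℝ) * (∑' j, a (n + 1) j / ((m : ℝ) ^ 2 + a n j * a (n + 1) j)) *
        (-I (k + 1) 0) := by
  set mr : ℝ := (m : ℝ) with hmrdef
  have hmr0 : 0 < mr := by rw [hmrdef]; exact_mod_cast hm
  set F : ℕ → ℝ := fun j => a (n + 1) j / (mr ^ 2 + a n j * a (n + 1) j) with hFdef
  have hFpos : ∀ j, 0 < F j := fun j => by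
    have h1 := ha n j; have h2 := ha (n + 1) j
    rw [hFdef]; positivity
  have hFle : ∀ j, F j ≤ 1 / a n j := by
    intro j
    have h1 := ha n j; have h2 := ha (n + 1) j
    rw [hFdef]
    rw [div_le_div_iff₀ (by positivity) h1]
    nlinarith [sq_nonneg mr]
  have hFsum : Summable F := Summable.of_nonneg_of_le (fun j => (hFpos j).le) hFle (hsum n)
  have hcomp : ∀ k,
      I (k + 1) 0 = 1 / c1 n k * I k 0 + (-mr / (a (n + 1) k * c1 n k)) * I k 1 ∧
      I (k + 1) 1 = (-mr / (a n (k + 1) * c1 n k)) * I k 0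
        + (c2 n k + mr ^ 2 / (a n (k + 1) * a (n + 1) k * c1 n k)) * I k 1 := by
    intro k
    rw [hIrec k]
    constructor <;> simp [Cmat, mulVec, dotProduct, Fin.sum_univ_two, hmrdef]
  have hu : ∀ k, 0 < -I k 0 := fun k => by linarith [hI1 k]
  have hrel : ∀ k, I (k + 1) 1 ≤ mr / a n (k + 1) * (-I (k + 1) 0) + I k 1 := by
    intro k
    obtain ⟨h0, h1⟩ := hcomp k
    have hc1k := hc1 n k
    have hank := ha n (k + 1)
    have hbnk := ha (n + 1) k
    have hiden : I (k + 1) 1 = mr / a n (k + 1) * (-I (k + 1) 0) + c2 n k * I k 1 := by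
      rw [h1, h0]
      field_simp [hank.ne', hbnk.ne', hc1k.1.ne']
      ring
    rw [hiden]
    have : c2 n k * I k 1 ≤ I k 1 := by nlinarith [(hc2 n k).2, hI2 k]
    linarith
  have hlow : ∀ k, (-I k 0) + mr / a (n + 1) k * I k 1 ≤ -I (k + 1) 0 := by
    intro k
    obtain ⟨h0, _⟩ := hcomp k
    have hc1k := hc1 n k
    have hbnk := ha (n + 1) k
    have heq : -I (k + 1) 0 = ((-I k 0) + mr / a (n + 1) k * I k 1) / c1 n k := by
      rw [h0]; field_simp [hbnk.ne', hc1k.1.ne']; ring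
    have ht : 0 < (-I k 0) + mr / a (n + 1) k * I k 1 :=
      add_pos (hu k) (mul_pos (div_pos hmr0 hbnk) (hI2 k))
    rw [heq, le_div_iff₀ hc1k.1]
    nlinarith [hc1k.2]
  have main : ∀ k, I k 1 ≤ mr * (∑ j ∈ Finset.range (k + 1), F j) * (-I (k + 1) 0) := by
    intro k
    induction k with
    | zero =>
      have hy0 : I 0 1 = mr / a n 0 := by rw [hI0]; simp
      have hx0 : -I 0 0 = 1 := by rw [hI0]; simp
      have hl := hlow 0
      rw [hx0, hy0] at hl
      have h1 := ha n 0; have h2 := ha (n + 1) 0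
      have hkey : mr * F 0 * (1 + mr / a (n + 1) 0 * (mr / a n 0)) = mr / a n 0 := by
        rw [hFdef]
        field_simp
        ring
      have hpos : 0 ≤ mr * F 0 := by positivity
      calc I 0 1 = mr * F 0 * (1 + mr / a (n + 1) 0 * (mr / a n 0)) := by rw [hy0, hkey]
        _ ≤ mr * F 0 * (-I 1 0) := mul_le_mul_of_nonneg_left hl hpos
        _ = mr * (∑ j ∈ Finset.range 1, F j) * (-I 1 0) := by rw [Finset.sum_range_one]
    | succ k ih =>
      have hSnn : 0 ≤ ∑ j ∈ Finset.range (k + 1), F j :=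
        Finset.sum_nonneg fun j _ => (hFpos j).le
      have hkey := key_ineq mr (a n (k + 1)) (a (n + 1) (k + 1)) (-I (k + 1) 0)
        (I (k + 1) 1) (I k 1) (∑ j ∈ Finset.range (k + 1), F j)
        hmr0 (ha n (k + 1)) (ha (n + 1) (k + 1)) (hu (k + 1)) (hI2 (k + 1)) hSnn
        (hrel k) ih
      have hsum_eq : (∑ j ∈ Finset.range (k + 1), F j)
          + a (n + 1) (k + 1) / (mr ^ 2 + a n (k + 1) * a (n + 1) (k + 1))
          = ∑ j ∈ Finset.range (k + 2), F j :=
        (Finset.sum_range_succ F (k + 1)).symm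
      rw [hsum_eq] at hkey
      have hSnn2 : 0 ≤ mr * ∑ j ∈ Finset.range (k + 2), F j := by
        have : 0 ≤ ∑ j ∈ Finset.range (k + 2), F j :=
          Finset.sum_nonneg fun j _ => (hFpos j).le
        positivity
      calc I (k + 1) 1
          ≤ mr * (∑ j ∈ Finset.range (k + 2), F j)
            * ((-I (k + 1) 0) + mr / a (n + 1) (k + 1) * I (k + 1) 1) := hkey
        _ ≤ mr * (∑ j ∈ Finset.range (k + 2), F j) * (-I (k + 2) 0) :=
            mul_le_mul_of_nonneg_left (hlow (k + 1)) hSnn2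
  intro k
  have hts : (∑ j ∈ Finset.range (k + 1), F j) ≤ ∑' j, F j :=
    Summable.sum_le_tsum _ (fun j _ => (hFpos j).le) hFsum
  have htse : (∑' j, a (n + 1) j / (mr ^ 2 + a n j * a (n + 1) j)) = ∑' j, F j := rfl
  rw [htse]
  calc I k 1 ≤ mr * (∑ j ∈ Finset.range (k + 1), F j) * (-I (k + 1) 0) := main k
    _ ≤ mr * (∑' j, F j) * (-I (k + 1) 0) :=
        mul_le_mul_of_nonneg_right (mul_le_mul_of_nonneg_left hts hmr0.le) (hu (k + 1)).le
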